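/- The set B(ℓ¹(ℕ)) of bounded adjointable operators of the pre-Hilbert ℂ-module ℓ¹(ℕ), i.e. the set of bounded linear operators T on ℓ²(ℕ) such that both T and its Hilbert-space adjoint T* map ℓ¹(ℕ) into ℓ¹(ℕ), is not dense in the algebra B(ℓ²(ℕ)) of all bounded operators on ℓ²(ℕ) with respect to the operator norm. -/

import Mathlib

noncomputable abbrev ellTwo : Type := lp (fun _ : ℕ => ℂ) 2

open scoped ENNReal

open Finset

open scoped ENNReal

namespace Stmt0Aux

/-- block index of `j`: `j` lies in block `n` iff `2^n ≤ j+1 < 2^(n+1)`. -/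
def b (j : ℕ) : ℕ := Nat.log 2 (j + 1)

lemma b_le (j : ℕ) : 2 ^ b j ≤ j + 1 := Nat.pow_log_le_self 2 (Nat.succ_ne_zero j)

lemma b_lt (j : ℕ) : j + 1 < 2 ^ (b j + 1) := Nat.lt_pow_succ_log_self one_lt_two (j + 1)

lemma b_eq {n i : ℕ} (hi : i < 2 ^ n) : b (2 ^ n - 1 + i) = n := by
  have h1 : 1 ≤ 2 ^ n := Nat.one_le_two_pow
  have h2 : (2 ^ n - 1 + i) + 1 = 2 ^ n + i := by omega
  unfold b
  rw [h2]
  exact Nat.log_eq_of_pow_le_of_lt_pow (by omega) (by rw [pow_succ]; omega)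

/-- the `n`-th block as a finset. -/
def S (n : ℕ) : Finset ℕ := (Finset.range (2 ^ n)).image (fun i => 2 ^ n - 1 + i)

lemma card_S (n : ℕ) : (S n).card = 2 ^ n := by
  rw [S, Finset.card_image_of_injective _ (fun a b h => by omega), Finset.card_range]

lemma b_of_mem_S {n j : ℕ} (hj : j ∈ S n) : b j = n := by
  rw [S, Finset.mem_image] at hj
  obtain ⟨i, hi, rfl⟩ := hj
  exact b_eq (Finset.mem_range.mp hi)

lemma mem_S_of_b {n j : ℕ} (hj : b j = n) : j ∈ S n := by
  have h1 := b_le j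
  have h2 := b_lt j
  rw [hj] at h1 h2
  rw [pow_succ] at h2
  rw [S, Finset.mem_image]
  exact ⟨j + 1 - 2 ^ n, Finset.mem_range.mpr (by omega), by omega⟩

noncomputable def c (n : ℕ) : ℝ := (Real.sqrt 2)⁻¹ ^ n

lemma sqrt2_sq : Real.sqrt 2 ^ 2 = 2 := Real.sq_sqrt (by norm_num)

lemma c_nonneg (n : ℕ) : 0 ≤ c n := pow_nonneg (inv_nonneg.mpr (Real.sqrt_nonneg 2)) n

lemma c_sq (n : ℕ) : c n ^ 2 = ((2:ℝ) ^ n)⁻¹ := by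
  rw [c, ← pow_mul, mul_comm, pow_mul, inv_pow, sqrt2_sq, inv_pow]

lemma two_pow_mul_c (n : ℕ) : (2:ℝ) ^ n * c n = Real.sqrt 2 ^ n := by
  have h : (2:ℝ) ^ n = (Real.sqrt 2 ^ n) ^ 2 := by rw [← pow_mul, mul_comm, pow_mul, sqrt2_sq]
  rw [c, inv_pow, h]
  have hpos : (0:ℝ) < Real.sqrt 2 ^ n := pow_pos (Real.sqrt_pos.mpr (by norm_num)) n
  field_simp


noncomputable abbrev ellOne : Type := lp (fun _ : ℕ => ℂ) 1

lemma sum_sq_le (f : ellTwo) (s : Finset ℕ) : ∑ i ∈ s, ‖f i‖ ^ 2 ≤ ‖f‖ ^ 2 := by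
  have h := lp.sum_rpow_le_norm_rpow (p := (2:ℝ≥0∞)) (by norm_num) f s
  have h2 : ((2:ℝ≥0∞)).toReal = ((2:ℕ):ℝ) := by norm_num
  rw [h2] at h
  simpa [Real.rpow_natCast] using h

lemma sum_abs_le (f : ellOne) (s : Finset ℕ) : ∑ i ∈ s, ‖f i‖ ≤ ‖f‖ := by
  have h := lp.sum_rpow_le_norm_rpow (p := (1:ℝ≥0∞)) (by norm_num) f s
  simpa [Real.rpow_one] using h

lemma norm_le_sq (f : ellTwo) {C : ℝ} (hC : 0 ≤ C)
    (h : ∀ s : Finset ℕ, ∑ i ∈ s, ‖f i‖ ^ 2 ≤ C ^ 2) : ‖f‖ ≤ C := by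
  refine lp.norm_le_of_forall_sum_le (by norm_num) hC (fun s => ?_)
  have h2 : ((2:ℝ≥0∞)).toReal = ((2:ℕ):ℝ) := by norm_num
  rw [h2]
  simpa [Real.rpow_natCast] using h s

lemma memℓp_two {f : ℕ → ℂ} {C : ℝ} (h : ∀ s : Finset ℕ, ∑ i ∈ s, ‖f i‖ ^ 2 ≤ C) :
    Memℓp f 2 := by
  refine memℓp_gen' (C := C) (fun s => ?_)
  have h2 : ((2:ℝ≥0∞)).toReal = ((2:ℕ):ℝ) := by norm_num
  rw [h2]
  simpa [Real.rpow_natCast] using h s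

noncomputable def Vfun (x : ℕ → ℂ) : ℕ → ℂ := fun j => (c (b j) : ℂ) * x (b j)

lemma Vfun_sum_bound (x : ellTwo) (s : Finset ℕ) :
    ∑ j ∈ s, ‖Vfun (⇑x) j‖ ^ 2 ≤ ‖x‖ ^ 2 := by
  have key : ∑ j ∈ s, ‖Vfun (⇑x) j‖ ^ 2
      = ∑ n ∈ s.image b, ∑ j ∈ s.filter (fun j => b j = n), ‖Vfun (⇑x) j‖ ^ 2 :=
    (Finset.sum_fiberwise_of_maps_to (fun j hj => Finset.mem_image_of_mem b hj) _).symm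
  rw [key]
  have step : ∀ n ∈ s.image b,
      ∑ j ∈ s.filter (fun j => b j = n), ‖Vfun (⇑x) j‖ ^ 2 ≤ ‖x n‖ ^ 2 := by
    intro n _
    have hsub : s.filter (fun j => b j = n) ⊆ S n := fun j hj =>
      mem_S_of_b (Finset.mem_filter.mp hj).2
    have hval : ∀ j ∈ s.filter (fun j => b j = n),
        ‖Vfun (⇑x) j‖ ^ 2 = ((2:ℝ) ^ n)⁻¹ * ‖x n‖ ^ 2 := by
      intro j hj
      have hb : b j = n := (Finset.mem_filter.mp hj).2
      rw [Vfun]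
      simp only [hb]
      rw [norm_mul, mul_pow, Complex.norm_real, Real.norm_eq_abs,
        abs_of_nonneg (c_nonneg n), c_sq]
    rw [Finset.sum_congr rfl hval, Finset.sum_const, nsmul_eq_mul]
    have hcard : ((s.filter (fun j => b j = n)).card : ℝ) ≤ (2:ℝ) ^ n := by
      have := Finset.card_le_card hsub
      rw [card_S] at this
      exact_mod_cast this
    calc ((s.filter (fun j => b j = n)).card : ℝ) * (((2:ℝ) ^ n)⁻¹ * ‖x n‖ ^ 2)
        ≤ (2:ℝ) ^ n * (((2:ℝ) ^ n)⁻¹ * ‖x n‖ ^ 2) := by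
          apply mul_le_mul_of_nonneg_right hcard
          positivity
      _ = ‖x n‖ ^ 2 := by
          rw [← mul_assoc, mul_inv_cancel₀ (by positivity), one_mul]
  calc ∑ n ∈ s.image b, ∑ j ∈ s.filter (fun j => b j = n), ‖Vfun (⇑x) j‖ ^ 2
      ≤ ∑ n ∈ s.image b, ‖x n‖ ^ 2 := Finset.sum_le_sum step
    _ ≤ ‖x‖ ^ 2 := sum_sq_le x _

lemma memV (x : ellTwo) : Memℓp (Vfun (⇑x)) 2 :=
  memℓp_two (fun s => Vfun_sum_bound x s)

noncomputable def Vlin : ellTwo →ₗ[ℂ] ellTwo where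
  toFun x := ⟨Vfun (⇑x), memV x⟩
  map_add' x y := by
    apply lp.ext
    funext j
    simp only [lp.coeFn_add, Pi.add_apply, Vfun]
    ring
  map_smul' a x := by
    apply lp.ext
    funext j
    simp only [lp.coeFn_smul, Pi.smul_apply, Vfun, RingHom.id_apply, smul_eq_mul]
    ring

noncomputable def Vop : ellTwo →L[ℂ] ellTwo :=
  Vlin.mkContinuous 1 (fun x => by
    rw [one_mul]
    exact norm_le_sq _ (norm_nonneg x) (fun s => Vfun_sum_bound x s))

lemma Vop_apply (x : ellTwo) (j : ℕ) : Vop x j = (c (b j) : ℂ) * x (b j) := rfl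

lemma mem_two_of_mem_one {f : ℕ → ℂ} (h : Memℓp f 1) : Memℓp f 2 :=
  h.of_exponent_ge (by norm_num)

noncomputable def inclLin : ellOne →ₗ[ℂ] ellTwo where
  toFun x := ⟨⇑x, mem_two_of_mem_one (lp.memℓp x)⟩
  map_add' x y := by
    apply lp.ext
    simp [lp.coeFn_add]
    rfl
  map_smul' a x := by
    apply lp.ext
    simp [lp.coeFn_smul]

lemma incl_norm_le (x : ellOne) : ‖inclLin x‖ ≤ ‖x‖ := by
  apply norm_le_sq _ (norm_nonneg x)
  intro s
  have h1 : ∑ i ∈ s, ‖x i‖ ^ 2 ≤ (∑ i ∈ s, ‖x i‖) ^ 2 :=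
    Finset.sum_sq_le_sq_sum_of_nonneg (fun i _ => norm_nonneg _)
  have h2 : ∑ i ∈ s, ‖x i‖ ≤ ‖x‖ := sum_abs_le x s
  have h3 : (∑ i ∈ s, ‖x i‖) ^ 2 ≤ ‖x‖ ^ 2 :=
    pow_le_pow_left₀ (Finset.sum_nonneg fun i _ => norm_nonneg _) h2 2
  exact le_trans h1 h3

noncomputable def incl : ellOne →L[ℂ] ellTwo :=
  inclLin.mkContinuous 1 (fun x => by rw [one_mul]; exact incl_norm_le x)

lemma incl_apply (x : ellOne) (i : ℕ) : incl x i = x i := rfl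

open Filter in
lemma tendsto_apply {p : ℝ≥0∞} [Fact (1 ≤ p)] {u : ℕ → lp (fun _ : ℕ => ℂ) p}
    {x : lp (fun _ : ℕ => ℂ) p} (h : Tendsto u atTop (nhds x)) (i : ℕ) :
    Tendsto (fun m => u m i) atTop (nhds (x i)) := by
  have hc : Continuous (fun f : lp (fun _ : ℕ => ℂ) p => f i) :=
    (continuous_apply i).comp (lp.uniformContinuous_coe (p := p)).continuous
  exact (hc.tendsto x).comp h

end Stmt0Aux

open Stmt0Aux Filter

/-- The set of bounded adjointable operators of the pre-Hilbert ℂ-module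
ℓ¹(ℕ), i.e. bounded operators `T` on ℓ²(ℕ) such that both `T` and its Hilbert-space
adjoint `T*` map ℓ¹(ℕ) into ℓ¹(ℕ), is not dense in `B(ℓ²(ℕ))` in the operator norm. -/
theorem stmt0 :
    ¬ ∀ (V : ellTwo →L[ℂ] ellTwo) (ε : ℝ), 0 < ε →
      ∃ T : ellTwo →L[ℂ] ellTwo,
        ((∀ x : ellTwo, Memℓp (fun i => x i) 1 → Memℓp (fun i => T x i) 1) ∧
         (∀ x : ellTwo, Memℓp (fun i => x i) 1 →
            Memℓp (fun i => (ContinuousLinearMap.adjoint T) x i) 1)) ∧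
        ‖T - V‖ < ε := by
  classical
  intro H
  obtain ⟨T, ⟨h1, -⟩, hTV⟩ := H Vop (1/2) (by norm_num)
  have memT' : ∀ x : ellOne, Memℓp (fun i => T (incl x) i) 1 := fun x =>
    h1 (incl x) (lp.memℓp x)
  let g : ellOne →ₗ[ℂ] ellOne :=
    { toFun := fun x => ⟨fun i => T (incl x) i, memT' x⟩
      map_add' := fun x y => by
        apply lp.ext
        funext i
        show T (incl (x + y)) i = T (incl x) i + T (incl y) i
        rw [map_add, map_add]
        rfl
      map_smul' := fun a x => by
        apply lp.ext
        funext i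
        show T (incl (a • x)) i = a • T (incl x) i
        rw [map_smul, map_smul]
        rfl }
  have hg : ∀ (u : ℕ → ellOne) (x y), Tendsto u atTop (nhds x) →
      Tendsto (g ∘ u) atTop (nhds y) → y = g x := by
    intro u x y hux huy
    apply lp.ext
    funext i
    have l1 : Tendsto (fun m => T (incl (u m)) i) atTop (nhds (T (incl x) i)) := by
      have ht : Tendsto (fun m => T (incl (u m))) atTop (nhds (T (incl x))) :=
        (T.continuous.tendsto _).comp ((incl.continuous.tendsto _).comp hux)
      exact tendsto_apply ht i
    have l2 : Tendsto (fun m => (g (u m)) i) atTop (nhds (y i)) := tendsto_apply huy i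
    exact tendsto_nhds_unique l2 l1
  let Tc : ellOne →L[ℂ] ellOne := ContinuousLinearMap.ofSeqClosedGraph hg
  set C := ‖Tc‖ with hCdef
  have hC0 : 0 ≤ C := norm_nonneg _
  have hs1 : (1:ℝ) < Real.sqrt 2 := by
    nlinarith [Real.sq_sqrt (show (0:ℝ) ≤ 2 by norm_num), Real.sqrt_nonneg 2]
  obtain ⟨n, hn⟩ := pow_unbounded_of_one_lt (2 * C) hs1
  set e2 : ellTwo := lp.single 2 n 1 with he2def
  set e1 : ellOne := lp.single 1 n 1 with he1def
  have he : incl e1 = e2 := lp.ext rfl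
  have he1norm : ‖e1‖ = 1 := by
    have := lp.norm_single (p := (1:ℝ≥0∞)) (by norm_num) (E := fun _ : ℕ => ℂ) n (1:ℂ)
    simpa [he1def] using this
  have he2norm : ‖e2‖ = 1 := by
    have := lp.norm_single (p := (2:ℝ≥0∞)) (by norm_num) (E := fun _ : ℕ => ℂ) n (1:ℂ)
    simpa [he2def] using this
  have hTce1 : ‖Tc e1‖ ≤ C :=
    le_trans (Tc.le_opNorm e1) (by rw [he1norm, mul_one])
  have hTc_coord : ∀ i, (Tc e1) i = T e2 i := by
    intro i
    show T (incl e1) i = T e2 i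
    rw [he]
  -- the three estimates
  have hA : ∑ j ∈ S n, ‖Vop e2 j‖ = Real.sqrt 2 ^ n := by
    have hval : ∀ j ∈ S n, ‖Vop e2 j‖ = c n := by
      intro j hj
      rw [Vop_apply, b_of_mem_S hj]
      have : (e2 : ℕ → ℂ) n = 1 := lp.single_apply_self 2 n 1
      rw [this, mul_one, Complex.norm_real, Real.norm_eq_abs, abs_of_nonneg (c_nonneg n)]
    rw [Finset.sum_congr rfl hval, Finset.sum_const, card_S, nsmul_eq_mul]
    push_cast
    exact two_pow_mul_c n
  have hB : ∑ j ∈ S n, ‖T e2 j‖ ≤ C := by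
    have hval : ∀ j ∈ S n, ‖T e2 j‖ = ‖(Tc e1) j‖ := fun j _ => by rw [hTc_coord]
    rw [Finset.sum_congr rfl hval]
    exact (sum_abs_le (Tc e1) (S n)).trans hTce1
  set w : ellTwo := T e2 - Vop e2 with hwdef
  have hw : ‖w‖ ≤ 1 / 2 := by
    have hw1 : w = (T - Vop) e2 := by rw [ContinuousLinearMap.sub_apply]
    rw [hw1]
    calc ‖(T - Vop) e2‖ ≤ ‖T - Vop‖ * ‖e2‖ := (T - Vop).le_opNorm e2
      _ ≤ (1/2) * 1 := by
          apply mul_le_mul hTV.le (le_of_eq he2norm) (norm_nonneg _) (by norm_num)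
      _ = 1 / 2 := by norm_num
  have hD : ∑ j ∈ S n, ‖w j‖ ≤ Real.sqrt 2 ^ n * (1 / 2) := by
    have ha0 : 0 ≤ ∑ j ∈ S n, ‖w j‖ := Finset.sum_nonneg fun j _ => norm_nonneg _
    have hb0 : (0:ℝ) ≤ Real.sqrt 2 ^ n * (1 / 2) := by positivity
    have hsq : (∑ j ∈ S n, ‖w j‖) ^ 2 ≤ (S n).card * ∑ j ∈ S n, ‖w j‖ ^ 2 :=
      sq_sum_le_card_mul_sum_sq
    have h2n : ((S n).card : ℝ) = (2:ℝ) ^ n := by rw [card_S]; push_cast; ring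
    have hsum2 : ∑ j ∈ S n, ‖w j‖ ^ 2 ≤ ‖w‖ ^ 2 := sum_sq_le w (S n)
    have hpow : (2:ℝ) ^ n = (Real.sqrt 2 ^ n) ^ 2 := by
      rw [← pow_mul, mul_comm, pow_mul, sqrt2_sq]
    have hsq2 : (∑ j ∈ S n, ‖w j‖) ^ 2 ≤ (Real.sqrt 2 ^ n * (1 / 2)) ^ 2 := by
      have hw2 : ‖w‖ ^ 2 ≤ (1/2) ^ 2 :=
        pow_le_pow_left₀ (norm_nonneg w) hw 2
      calc (∑ j ∈ S n, ‖w j‖) ^ 2 ≤ ((S n).card : ℝ) * ∑ j ∈ S n, ‖w j‖ ^ 2 := by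
            exact_mod_cast hsq
        _ ≤ (2:ℝ) ^ n * (1/2) ^ 2 := by
            rw [h2n]
            apply mul_le_mul le_rfl (hsum2.trans hw2)
              (Finset.sum_nonneg fun j _ => by positivity) (by positivity)
        _ = (Real.sqrt 2 ^ n * (1 / 2)) ^ 2 := by rw [hpow]; ring
    have := Real.sqrt_le_sqrt hsq2
    rw [Real.sqrt_sq ha0, Real.sqrt_sq hb0] at this
    exact this
  have htri : Real.sqrt 2 ^ n ≤ C + Real.sqrt 2 ^ n * (1 / 2) := by
    calc Real.sqrt 2 ^ n = ∑ j ∈ S n, ‖Vop e2 j‖ := hA.symm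
      _ ≤ ∑ j ∈ S n, (‖T e2 j‖ + ‖w j‖) := by
          apply Finset.sum_le_sum
          intro j _
          have hv : Vop e2 j = T e2 j - w j := by
            have : w j = T e2 j - Vop e2 j := by rw [hwdef, lp.coeFn_sub]; rfl
            rw [this]; ring
          rw [hv]
          exact norm_sub_le _ _
      _ = (∑ j ∈ S n, ‖T e2 j‖) + ∑ j ∈ S n, ‖w j‖ := Finset.sum_add_distrib
      _ ≤ C + Real.sqrt 2 ^ n * (1 / 2) := add_le_add hB hD
  linarith
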